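/- arXiv:1507.02359 — 2 statements merged into one kernel-verified Lean document; each statement's English description precedes it below -/
import Mathlib

section
/- Let T > 0 and let η : [0,T] → ℝ be continuous. If ∫₀ᵀ (s+1)^t η(s) ds = 0 for every real number t ≥ T, then η(s) = 0 for all s ∈ [0,T]. -/
open MeasureTheory intervalIntegral Polynomial Set

/-- If `η` is continuous on `[0, T]` (with `T > 0`) and `∫₀ᵀ (s+1)^t η(s) ds = 0` for every
real `t ≥ T`, then `η` vanishes identically on `[0, T]`. -/
theorem vanishing_of_weighted_moments (T : ℝ) (hT : 0 < T) (η : ℝ → ℝ)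
    (hη : ContinuousOn η (Set.Icc 0 T))
    (h : ∀ t : ℝ, T ≤ t → ∫ s in (0:ℝ)..T, (s + 1) ^ t * η s = 0) :
    ∀ s ∈ Set.Icc (0:ℝ) T, η s = 0 := by
  have huIcc : Set.uIcc (0:ℝ) T = Set.Icc 0 T := Set.uIcc_of_le hT.le
  set g : ℝ → ℝ := fun s => (s + 1) ^ T * η s with hg_def
  have hg : ContinuousOn g (Set.Icc 0 T) := by
    apply ContinuousOn.mul _ hη
    exact ((continuous_id.add continuous_const).continuousOn).rpow_const
      (fun x _ => Or.inr hT.le)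
  -- integrability helper
  have hint : ∀ f : ℝ → ℝ, ContinuousOn f (Set.Icc 0 T) →
      IntervalIntegrable f volume 0 T := by
    intro f hf
    apply ContinuousOn.intervalIntegrable
    rwa [huIcc]
  have hgi : IntervalIntegrable g volume 0 T := hint g hg
  -- Step A: moments against (s+1)^n vanish
  have hA : ∀ n : ℕ, ∫ s in (0:ℝ)..T, (s + 1) ^ n * g s = 0 := by
    intro n
    have ht := h (T + n) (le_add_of_nonneg_right (Nat.cast_nonneg n))
    have hcong : (∫ s in (0:ℝ)..T, (s + 1) ^ n * g s)
        = ∫ s in (0:ℝ)..T, (s + 1) ^ (T + (n:ℝ)) * η s := by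
      apply intervalIntegral.integral_congr
      intro x hx
      rw [huIcc] at hx
      have hx1 : (0:ℝ) < x + 1 := by linarith [hx.1]
      simp only [hg_def]
      rw [Real.rpow_add hx1, ← Real.rpow_natCast (x+1) n]
      ring
    rw [hcong]; exact ht
  -- Step B': moments against p(s+1) vanish
  have hB' : ∀ p : ℝ[X], ∫ s in (0:ℝ)..T, p.eval (s + 1) * g s = 0 := by
    intro p
    induction p using Polynomial.induction_on' with
    | add p q hp hq =>
        have h1 : IntervalIntegrable (fun s => p.eval (s + 1) * g s) volume 0 T :=
          hint _ (((p.continuous_aeval.comp (by continuity)).continuousOn).mul hg)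
        have h2 : IntervalIntegrable (fun s => q.eval (s + 1) * g s) volume 0 T :=
          hint _ (((q.continuous_aeval.comp (by continuity)).continuousOn).mul hg)
        simpa [add_mul, intervalIntegral.integral_add h1 h2, hp] using hq
    | monomial n a =>
        have : (fun s : ℝ => ((Polynomial.monomial n a).eval (s + 1)) * g s)
            = fun s => a * ((s + 1) ^ n * g s) := by
          funext s; simp [Polynomial.eval_monomial]; ring
        rw [this, intervalIntegral.integral_const_mul, hA n, mul_zero]
  -- Step B: moments against any polynomial vanish
  have hB : ∀ p : ℝ[X], ∫ s in (0:ℝ)..T, p.eval s * g s = 0 := by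
    intro p
    have := hB' (p.comp (X - C 1))
    simpa [Polynomial.eval_comp] using this
  -- bound for g
  obtain ⟨M, hM⟩ := IsCompact.exists_bound_of_continuousOn isCompact_Icc hg
  have hM0 : 0 ≤ M := le_trans (norm_nonneg _) (hM 0 (Set.left_mem_Icc.mpr hT.le))
  -- Step C: ∫ g² = 0
  have hC : ∫ s in (0:ℝ)..T, g s * g s = 0 := by
    by_contra hne
    set I := ∫ s in (0:ℝ)..T, g s * g s with hI
    have hIpos : 0 < |I| := abs_pos.mpr hne
    set ε : ℝ := |I| / (M * T + 1) with hε
    have hden : 0 < M * T + 1 := by positivity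
    have hεpos : 0 < ε := div_pos hIpos hden
    obtain ⟨p, hp⟩ := exists_polynomial_near_of_continuousOn 0 T g hg ε hεpos
    have hsplit : I = ∫ s in (0:ℝ)..T, (g s - p.eval s) * g s := by
      have h1 : IntervalIntegrable (fun s => (g s - p.eval s) * g s) volume 0 T :=
        hint _ ((hg.sub (p.continuous_aeval.continuousOn)).mul hg)
      have h2 : IntervalIntegrable (fun s => p.eval s * g s) volume 0 T :=
        hint _ ((p.continuous_aeval.continuousOn).mul hg)
      have : I = ∫ s in (0:ℝ)..T, ((g s - p.eval s) * g s + p.eval s * g s) := by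
        rw [hI]; apply intervalIntegral.integral_congr; intro x _; ring
      rw [this, intervalIntegral.integral_add h1 h2, hB p, add_zero]
    have hbound : |I| ≤ ε * M * (T - 0) := by
      rw [hsplit]
      have := intervalIntegral.norm_integral_le_of_norm_le_const
        (a := (0:ℝ)) (b := T) (C := ε * M)
        (f := fun s => (g s - p.eval s) * g s) ?_
      · calc ‖∫ s in (0:ℝ)..T, (g s - p.eval s) * g s‖ ≤ ε * M * |T - 0| := this
          _ = ε * M * (T - 0) := by rw [abs_of_nonneg (by linarith)]
      · intro x hx
        rw [Set.uIoc_of_le hT.le] at hx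
        have hx' : x ∈ Set.Icc (0:ℝ) T := ⟨hx.1.le, hx.2⟩
        have h1 : ‖g x - p.eval x‖ ≤ ε := by
          rw [Real.norm_eq_abs, abs_sub_comm]
          exact (hp x hx').le
        calc ‖(g x - p.eval x) * g x‖ = ‖g x - p.eval x‖ * ‖g x‖ := norm_mul _ _
          _ ≤ ε * M := mul_le_mul h1 (hM x hx') (norm_nonneg _) hεpos.le
    have : ε * M * (T - 0) < |I| := by
      rw [hε, sub_zero]
      rw [div_mul_eq_mul_div, div_mul_eq_mul_div, div_lt_iff₀ hden]
      have : |I| * M * T < |I| * (M * T + 1) := by nlinarith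
      linarith [this]
    linarith
  -- Step D: g = 0 on [0,T]
  have hnonneg : (0:ℝ → ℝ) ≤ᵐ[volume.restrict (Set.Ioc 0 T)] fun s => g s * g s :=
    Filter.Eventually.of_forall fun x => mul_self_nonneg _
  have hsqi : IntervalIntegrable (fun s => g s * g s) volume 0 T := hint _ (hg.mul hg)
  have hae : (fun s => g s * g s) =ᵐ[volume.restrict (Set.Ioc 0 T)] 0 :=
    (intervalIntegral.integral_eq_zero_iff_of_le_of_nonneg_ae hT.le hnonneg hsqi).mp hC
  have hae' : (fun s => g s * g s) =ᵐ[volume.restrict (Set.Icc 0 T)] 0 := by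
    rwa [Measure.restrict_congr_set Ioc_ae_eq_Icc] at hae
  have hEq : Set.EqOn (fun s => g s * g s) 0 (Set.Icc 0 T) :=
    Measure.eqOn_Icc_of_ae_eq volume hT.ne hae' (hg.mul hg) continuousOn_const
  intro s hs
  have hgs : g s = 0 := by
    have := hEq hs
    simp only [Pi.zero_apply] at this
    exact mul_self_eq_zero.mp this
  have hs1 : (0:ℝ) < s + 1 := by linarith [hs.1]
  have hpow : (s + 1 : ℝ) ^ T ≠ 0 := (Real.rpow_pos_of_pos hs1 T).ne'
  have := hgs
  simp only [hg_def] at this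
  exact (mul_eq_zero.mp this).resolve_left hpow
end

section
/- Let T > 0. There is no differentiable function η : [0,∞) → ℝ with η(0) = 1 such that η(t) = 0 for all t ≥ T and η'(t) + ∫₀ᵗ (s+1)^t η(s) ds = 0 for all t ≥ T. In other words, for the memory kernel M(t,s) = (s+1)^t, no control v vanishing after time T can steer the memory ODE η' (t) + ∫₀ᵗ M(t,s) η(s) ds = v(t), η(0) = 1, to permanent rest on [T,∞). -/
open MeasureTheory intervalIntegral Set Polynomial

/-- A continuous function on `[0,T]` orthogonal to all polynomials vanishes at `0`. -/
lemma moment_zero {T : ℝ} (hT : 0 < T) {F : ℝ → ℝ} (hF : ContinuousOn F (Set.Icc 0 T))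
    (h : ∀ q : Polynomial ℝ, (∫ s in (0:ℝ)..T, F s * q.eval s) = 0) : F 0 = 0 := by
  by_contra h0
  set A := ∫ s in (0:ℝ)..T, F s ^ 2 with hA
  have hF2 : ContinuousOn (fun s => F s ^ 2) (Set.Icc 0 T) := by
    exact hF.pow 2
  have hpos : 0 < A := by
    apply intervalIntegral.integral_pos hT hF2 (fun x _ => sq_nonneg _)
    exact ⟨0, ⟨le_refl _, hT.le⟩, pow_two_pos_of_ne_zero h0⟩
  -- bound on F
  obtain ⟨C, hC⟩ := isCompact_Icc.exists_bound_of_continuousOn hF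
  have hC0 : 0 ≤ C := le_trans (norm_nonneg _) (hC 0 ⟨le_refl _, hT.le⟩)
  have key : ∀ ε : ℝ, 0 < ε → A ≤ ε := by
    intro ε hε
    set δ := ε / ((C + 1) * T) with hδdef
    have hδ : 0 < δ := by positivity
    -- Weierstrass approximation
    set f : C(Set.Icc (0:ℝ) T, ℝ) := ⟨(Set.Icc (0:ℝ) T).restrict F, hF.restrict⟩ with hf
    obtain ⟨p, hp⟩ := exists_polynomial_near_continuousMap 0 T f δ hδ
    have hclose : ∀ x ∈ Set.Icc (0:ℝ) T, |p.eval x - F x| ≤ δ := by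
      intro x hx
      have := (p.toContinuousMapOn (Set.Icc (0:ℝ) T) - f).norm_coe_le_norm ⟨x, hx⟩
      simp only [ContinuousMap.sub_apply, hf] at this
      calc |p.eval x - F x| = ‖(p.toContinuousMapOn (Set.Icc (0:ℝ) T)) ⟨x, hx⟩
            - f ⟨x, hx⟩‖ := by simp [hf, Real.norm_eq_abs, Set.restrict]
        _ ≤ _ := (p.toContinuousMapOn (Set.Icc (0:ℝ) T) - f).norm_coe_le_norm ⟨x, hx⟩
        _ ≤ δ := hp.le
    have hi1 : IntervalIntegrable (fun s => F s * (F s - p.eval s)) volume 0 T := by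
      apply ContinuousOn.intervalIntegrable
      rw [Set.uIcc_of_le hT.le]
      exact hF.mul (hF.sub (Polynomial.continuous p).continuousOn)
    have hi2 : IntervalIntegrable (fun s => F s * p.eval s) volume 0 T := by
      apply ContinuousOn.intervalIntegrable
      rw [Set.uIcc_of_le hT.le]
      exact hF.mul (Polynomial.continuous p).continuousOn
    have hsplit : A = ∫ s in (0:ℝ)..T, F s * (F s - p.eval s) := by
      have hadd := intervalIntegral.integral_add hi1 hi2
      have hcg : A = ∫ s in (0:ℝ)..T, (F s * (F s - p.eval s) + F s * p.eval s) := by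
        rw [hA]; congr 1; ext s; ring
      rw [hcg, hadd, h p, add_zero]
    have hbound : ‖∫ s in (0:ℝ)..T, F s * (F s - p.eval s)‖ ≤ C * δ * |T - 0| := by
      apply intervalIntegral.norm_integral_le_of_norm_le_const
      intro x hx
      rw [Set.uIoc_of_le hT.le] at hx
      have hx' : x ∈ Set.Icc (0:ℝ) T := ⟨hx.1.le, hx.2⟩
      have h1 : |F x| ≤ C := by simpa [Real.norm_eq_abs] using hC x hx'
      have h2 : |F x - p.eval x| ≤ δ := by rw [abs_sub_comm]; exact hclose x hx'
      calc ‖F x * (F x - p.eval x)‖ = |F x| * |F x - p.eval x| := by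
            simp [Real.norm_eq_abs, abs_mul]
        _ ≤ C * δ := mul_le_mul h1 h2 (abs_nonneg _) hC0
    have hδε : C * δ * |T - 0| ≤ ε := by
      rw [abs_of_nonneg (by linarith : (0:ℝ) ≤ T - 0)]
      have hne : (C + 1) * T ≠ 0 := by positivity
      have : δ * ((C + 1) * T) = ε := div_mul_cancel₀ _ hne
      nlinarith [hδ.le]
    calc A ≤ ‖∫ s in (0:ℝ)..T, F s * (F s - p.eval s)‖ := by
          rw [hsplit]; exact le_abs_self _
      _ ≤ ε := le_trans hbound hδε
  linarith [key (A / 2) (by linarith)]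

/-- For the memory kernel `M(t,s) = (s+1)^t`, no solution of the memory ODE starting from
`η(0) = 1` can be steered to permanent rest after time `T`: there is no differentiable
function `η : [0,∞) → ℝ` with `η 0 = 1`, `η t = 0` for all `t ≥ T`, and
`η'(t) + ∫₀ᵗ (s+1)^t η(s) ds = 0` for all `t ≥ T`. -/
theorem no_permanent_rest_for_memory_ode (T : ℝ) (hT : 0 < T) :
    ¬ ∃ η : ℝ → ℝ, DifferentiableOn ℝ η (Set.Ici 0) ∧ η 0 = 1 ∧
        (∀ t : ℝ, T ≤ t → η t = 0) ∧
        (∀ t : ℝ, T ≤ t →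
          derivWithin η (Set.Ici 0) t + ∫ s in (0:ℝ)..t, (s + 1) ^ t * η s = 0) := by
  rintro ⟨η, hdiff, h0, hzero, hode⟩
  have hcont : ContinuousOn η (Set.Ici 0) := hdiff.continuousOn
  -- the `derivWithin` vanishes for `t > T`
  have hderiv : ∀ t : ℝ, T < t → derivWithin η (Set.Ici 0) t = 0 := by
    intro t ht
    have hmem : Set.Ici (0:ℝ) ∈ nhds t := Ici_mem_nhds (hT.trans ht)
    rw [derivWithin_of_mem_nhds hmem]
    have heq : η =ᶠ[nhds t] fun _ => 0 :=
      Filter.eventually_of_mem (Ioi_mem_nhds ht) fun x hx => hzero x (le_of_lt hx)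
    rw [heq.deriv_eq]
    simp
  -- continuity of the integrand
  have hker : ∀ t : ℝ, ContinuousOn (fun s : ℝ => (s + 1) ^ t) (Set.Ici (-1/2 : ℝ)) := by
    intro t
    apply ContinuousOn.rpow_const (by fun_prop)
    intro x hx
    left
    have : (-1/2 : ℝ) ≤ x := hx
    intro hxe; rw [add_eq_zero_iff_eq_neg] at hxe; linarith
  have hIcc : ∀ a b : ℝ, 0 ≤ a → Set.Icc a b ⊆ Set.Ici (-1/2 : ℝ) := by
    intro a b ha x hx
    have := hx.1
    show (-1/2 : ℝ) ≤ x
    linarith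
  have hInt : ∀ t a b : ℝ, 0 ≤ a → a ≤ b →
      IntervalIntegrable (fun s => (s + 1) ^ t * η s) volume a b := by
    intro t a b ha hab
    apply ContinuousOn.intervalIntegrable
    rw [Set.uIcc_of_le hab]
    exact ((hker t).mono (hIcc a b ha)).mul
      (hcont.mono fun x hx => le_trans ha hx.1)
  -- the truncated integral vanishes for `t > T`
  have hint : ∀ t : ℝ, T < t → (∫ s in (0:ℝ)..T, (s + 1) ^ t * η s) = 0 := by
    intro t ht
    have hfull : (∫ s in (0:ℝ)..t, (s + 1) ^ t * η s) = 0 := by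
      have := hode t ht.le
      rw [hderiv t ht] at this
      linarith
    have hsum := intervalIntegral.integral_add_adjacent_intervals
      (hInt t 0 T le_rfl hT.le) (hInt t T t hT.le ht.le)
    have htail : (∫ s in T..t, (s + 1) ^ t * η s) = 0 := by
      have hEq : Set.EqOn (fun s : ℝ => (s + 1) ^ t * η s) (fun _ => 0) (Set.uIcc T t) := by
        intro x hx
        rw [Set.uIcc_of_le ht.le] at hx
        simp [hzero x hx.1]
      rw [intervalIntegral.integral_congr hEq]
      simp
    rw [hfull] at hsum
    linarith [htail, hsum]
  -- moment conditions for `F`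
  set F : ℝ → ℝ := fun s => (s + 1) ^ (T + 1) * η s with hF
  have hFcont : ContinuousOn F (Set.Icc 0 T) := by
    exact ((hker (T+1)).mono (hIcc 0 T le_rfl)).mul (hcont.mono fun x hx => hx.1)
  have hmom : ∀ n : ℕ, (∫ s in (0:ℝ)..T, F s * (s + 1) ^ n) = 0 := by
    intro n
    have ht : T < T + 1 + n := by
      have : (0:ℝ) ≤ (n:ℝ) := Nat.cast_nonneg n
      linarith
    have h1 := hint (T + 1 + n) ht
    have hEq : Set.EqOn (fun s : ℝ => F s * (s + 1) ^ n)
        (fun s : ℝ => (s + 1) ^ (T + 1 + (n:ℝ)) * η s) (Set.uIcc 0 T) := by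
      intro x hx
      rw [Set.uIcc_of_le hT.le] at hx
      have hx1 : (0:ℝ) < x + 1 := by linarith [hx.1]
      have hpow : (x + 1) ^ (T + 1 + (n:ℝ)) = (x + 1) ^ (T + 1) * (x + 1) ^ n := by
        rw [← Real.rpow_natCast (x+1) n, ← Real.rpow_add hx1]
      simp only [hF, hpow]
      ring
    rw [intervalIntegral.integral_congr hEq]
    exact h1
  have hFint : ∀ g : ℝ → ℝ, Continuous g →
      IntervalIntegrable (fun s => F s * g s) volume 0 T := by
    intro g hg
    apply ContinuousOn.intervalIntegrable
    rw [Set.uIcc_of_le hT.le]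
    exact hFcont.mul hg.continuousOn
  have hpoly : ∀ q : Polynomial ℝ, (∫ s in (0:ℝ)..T, F s * q.eval (s + 1)) = 0 := by
    intro q
    induction q using Polynomial.induction_on with
    | C a =>
        have h00 := hmom 0
        simp only [pow_zero, mul_one] at h00
        have hca : (∫ s in (0:ℝ)..T, F s * (Polynomial.C a).eval (s+1))
            = a * ∫ s in (0:ℝ)..T, F s := by
          rw [← intervalIntegral.integral_const_mul]
          congr 1; ext s; simp [mul_comm]
        rw [hca, h00, mul_zero]
    | add p q hp hq =>
        have hip := hFint (fun s => p.eval (s+1))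
          ((Polynomial.continuous p).comp (continuous_add_right 1))
        have hiq := hFint (fun s => q.eval (s+1))
          ((Polynomial.continuous q).comp (continuous_add_right 1))
        have : (∫ s in (0:ℝ)..T, F s * (p + q).eval (s+1))
            = (∫ s in (0:ℝ)..T, (F s * p.eval (s+1) + F s * q.eval (s+1))) := by
          congr 1; ext s; simp [Polynomial.eval_add]; ring
        rw [this, intervalIntegral.integral_add hip hiq, hp, hq, add_zero]
    | monomial n a _ =>
        have : (∫ s in (0:ℝ)..T, F s * (Polynomial.C a * Polynomial.X ^ (n+1)).eval (s+1))
            = a * ∫ s in (0:ℝ)..T, F s * (s + 1) ^ (n+1) := by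
          rw [← intervalIntegral.integral_const_mul]
          congr 1; ext s; simp; ring
        rw [this, hmom (n+1), mul_zero]
  have hq : ∀ q : Polynomial ℝ, (∫ s in (0:ℝ)..T, F s * q.eval s) = 0 := by
    intro q
    have := hpoly (q.comp (Polynomial.X - Polynomial.C 1))
    have hEq : ∀ s : ℝ, (q.comp (Polynomial.X - Polynomial.C 1)).eval (s + 1) = q.eval s := by
      intro s; simp [Polynomial.eval_comp]
    simpa only [hEq] using this
  have hF0 : F 0 = 0 := moment_zero hT hFcont hq
  rw [hF] at hF0
  simp only [zero_add, Real.one_rpow, h0, mul_one] at hF0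
  exact one_ne_zero hF0
end
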